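/- Let d be a positive odd integer, k̃ = ⌊(d+2)/4⌋, and d_j = (∏_{1≤ℓ≤k̃} (d + 2 - 2ℓ - 2j)) / (∏_{1≤ℓ≤k̃, ℓ≠j} (2ℓ - 2j)). Then ∑_{j=1}^{k̃} d_j/(2j) + 1 = ∏_{ℓ=1}^{k̃} (d + 2 - 2ℓ)/(2ℓ). -/

import Mathlib

open Polynomial Finset Nat in
private lemma pascal_step_di (k : ℕ) (f : ℕ → ℝ) :
    ∑ j ∈ range (k + 2), (-1 : ℝ) ^ j * ((k+1).choose j : ℝ) * f j
      = ∑ j ∈ range (k + 1), (-1 : ℝ) ^ j * (k.choose j : ℝ) * (f j - f (j+1)) := by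
  have helper : ∑ j ∈ range (k+1), (-1:ℝ)^j * (k.choose j : ℝ) * f j
      = f 0 - ∑ j ∈ range (k+1), (-1:ℝ)^j * (k.choose (j+1) : ℝ) * f (j+1) := by
    rw [Finset.sum_range_succ' (fun j => (-1:ℝ)^j * (k.choose j : ℝ) * f j) k,
        Finset.sum_range_succ (fun j => (-1:ℝ)^j * (k.choose (j+1) : ℝ) * f (j+1)) k]
    simp only [Nat.choose_succ_self, Nat.cast_zero, pow_zero, Nat.choose_zero_right,
      Nat.cast_one, mul_zero, zero_mul, add_zero]
    rw [eq_sub_iff_add_eq, add_right_comm, ← Finset.sum_add_distrib]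
    rw [Finset.sum_eq_zero (fun (j:ℕ) _ => by ring :
      ∀ j ∈ range k, (-1:ℝ)^(j+1) * (k.choose (j+1) : ℝ) * f (j+1)
        + (-1:ℝ)^j * (k.choose (j+1) : ℝ) * f (j+1) = 0)]
    ring
  rw [Finset.sum_range_succ' (fun j => (-1:ℝ)^j * ((k+1).choose j : ℝ) * f j) (k+1)]
  have e1 : ∑ j ∈ range (k+1), (-1:ℝ)^(j+1) * ((k+1).choose (j+1) : ℝ) * f (j+1)
      = (∑ j ∈ range (k+1), -((-1:ℝ)^j * (k.choose j : ℝ) * f (j+1)))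
        + (∑ j ∈ range (k+1), -((-1:ℝ)^j * (k.choose (j+1) : ℝ) * f (j+1))) := by
    rw [← Finset.sum_add_distrib]
    refine Finset.sum_congr rfl fun j _ => ?_
    rw [Nat.choose_succ_succ]; push_cast; ring
  rw [e1]
  have e2 : ∑ j ∈ range (k+1), (-1:ℝ)^j * (k.choose j : ℝ) * (f j - f (j+1))
      = ∑ j ∈ range (k+1), ((-1:ℝ)^j * (k.choose j : ℝ) * f j
          + -((-1:ℝ)^j * (k.choose j : ℝ) * f (j+1))) := by
    exact Finset.sum_congr rfl fun j _ => by ring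
  rw [e2, Finset.sum_add_distrib, helper]
  simp only [Finset.sum_neg_distrib, Nat.choose_zero_right, Nat.cast_one]
  ring

open Polynomial Finset Nat in
private lemma taylor_coeff_high_di (p : ℝ[X]) (i : ℕ) (h : p.natDegree ≤ i) :
    (Polynomial.taylor 1 p).coeff i = p.coeff i := by
  rw [Polynomial.taylor_coeff]
  have hdeg : (Polynomial.hasseDeriv i p).natDegree = 0 :=
    le_antisymm (le_trans (Polynomial.natDegree_hasseDeriv_le p i) (by omega)) (Nat.zero_le _)
  rw [Polynomial.eq_C_of_natDegree_le_zero hdeg.le, Polynomial.eval_C,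
    Polynomial.hasseDeriv_coeff]
  simp

open Polynomial Finset Nat in
private lemma taylor_coeff_mid_di (k : ℕ) (p : ℝ[X]) (h : p.natDegree ≤ k + 1) :
    (Polynomial.taylor 1 p).coeff k = p.coeff k + ((k:ℝ)+1) * p.coeff (k+1) := by
  rw [Polynomial.taylor_coeff]
  have h2 : p.natDegree - k ≤ 1 := by omega
  have hdeg : (Polynomial.hasseDeriv k p).natDegree < 2 :=
    lt_of_le_of_lt (le_trans (Polynomial.natDegree_hasseDeriv_le p k) h2) one_lt_two
  rw [Polynomial.eval_eq_sum_range' hdeg 1]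
  rw [Finset.sum_range_succ, Finset.sum_range_one]
  simp only [Polynomial.hasseDeriv_coeff, zero_add, Nat.choose_self, Nat.cast_one, one_mul,
    pow_zero, pow_one, mul_one]
  rw [show 1 + k = k + 1 from by omega, Nat.choose_succ_self_right]
  push_cast; ring

open Polynomial Finset Nat in
private lemma alt_sum_eval_di : ∀ k : ℕ, ∀ p : ℝ[X], p.natDegree ≤ k →
    ∑ j ∈ range (k+1), (-1:ℝ)^j * (k.choose j : ℝ) * p.eval (j : ℝ)
      = (-1)^k * (k ! : ℝ) * p.coeff k := by
  intro k
  induction k with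
  | zero =>
    intro p hp
    obtain ⟨c, rfl⟩ : ∃ c, p = C c := ⟨p.coeff 0, Polynomial.eq_C_of_natDegree_le_zero hp⟩
    simp
  | succ k ih =>
    intro p hp
    have hps : (k + 1) + 1 = k + 2 := rfl
    rw [hps, pascal_step_di k (fun j => p.eval (j : ℝ))]
    set q : ℝ[X] := p - Polynomial.taylor 1 p with hq
    have hqev : ∀ j : ℕ, p.eval ((j:ℕ) : ℝ) - p.eval (((j+1 : ℕ)) : ℝ) = q.eval ((j:ℕ):ℝ) := by
      intro j
      rw [hq, Polynomial.eval_sub, Polynomial.taylor_eval]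
      push_cast
      ring_nf
    have hqdeg : q.natDegree ≤ k := by
      rw [Polynomial.natDegree_le_iff_coeff_eq_zero]
      intro m hm
      have hpm : p.natDegree ≤ m := le_trans hp hm
      rw [hq, Polynomial.coeff_sub, taylor_coeff_high_di p m hpm, sub_self]
    have hqk : q.coeff k = -(((k:ℝ)+1) * p.coeff (k+1)) := by
      rw [hq, Polynomial.coeff_sub, taylor_coeff_mid_di k p hp]
      ring
    calc ∑ j ∈ range (k+1), (-1:ℝ)^j * (k.choose j : ℝ)
            * (p.eval ((j:ℕ):ℝ) - p.eval (((j+1:ℕ)):ℝ))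
        = ∑ j ∈ range (k+1), (-1:ℝ)^j * (k.choose j : ℝ) * q.eval ((j:ℕ):ℝ) :=
          Finset.sum_congr rfl fun j _ => by rw [hqev j]
      _ = (-1)^k * (k ! : ℝ) * q.coeff k := ih q hqdeg
      _ = (-1)^(k+1) * ((k+1)! : ℝ) * p.coeff (k+1) := by
          rw [hqk, Nat.factorial_succ]; push_cast; ring

open Polynomial Finset Nat in
private lemma alt_sum_prod_di (k : ℕ) (a : ℕ → ℝ) :
    ∑ j ∈ range (k+1), (-1:ℝ)^j * (k.choose j : ℝ) * ∏ ℓ ∈ Icc 1 k, (a ℓ - 2 * (j:ℝ))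
      = 2^k * (k ! : ℝ) := by
  set p : ℝ[X] := ∏ ℓ ∈ Icc 1 k, (C (-2:ℝ) * X + C (a ℓ)) with hp
  have hfac : ∀ ℓ : ℕ, (C (-2:ℝ) * X + C (a ℓ)) ≠ 0 := by
    intro ℓ h
    have := Polynomial.natDegree_linear (show (-2:ℝ) ≠ 0 by norm_num) (b := a ℓ)
    rw [h] at this
    simp at this
  have heval : ∀ j : ℕ, p.eval ((j:ℕ):ℝ) = ∏ ℓ ∈ Icc 1 k, (a ℓ - 2 * (j:ℝ)) := by
    intro j
    rw [hp, Polynomial.eval_prod]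
    exact Finset.prod_congr rfl fun ℓ _ => by simp; ring
  have hdeg : p.natDegree = k := by
    rw [hp, Polynomial.natDegree_prod _ _ (fun ℓ _ => hfac ℓ)]
    rw [Finset.sum_congr rfl fun ℓ _ =>
      Polynomial.natDegree_linear (show (-2:ℝ) ≠ 0 by norm_num)]
    simp
  have hcoeff : p.coeff k = (-2)^k := by
    have h1 : p.leadingCoeff = ∏ ℓ ∈ Icc 1 k, (C (-2:ℝ) * X + C (a ℓ)).leadingCoeff := by
      rw [hp]; exact Polynomial.leadingCoeff_prod _ _
    have h2 : p.leadingCoeff = (-2)^k := by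
      rw [h1, Finset.prod_congr rfl fun ℓ _ =>
        Polynomial.leadingCoeff_linear (show (-2:ℝ) ≠ 0 by norm_num)]
      simp
    rw [show p.coeff k = p.leadingCoeff by rw [Polynomial.leadingCoeff, hdeg], h2]
  rw [Finset.sum_congr rfl fun j _ => by rw [← heval j]]
  rw [alt_sum_eval_di k p hdeg.le, hcoeff]
  rw [show ((-1:ℝ))^k * (k ! : ℝ) * (-2)^k = ((-1)*(-2))^k * (k ! :ℝ) by rw [mul_pow]; ring]
  norm_num

open Polynomial Finset Nat in
private lemma prod_Icc_cast_di (m : ℕ) : ∏ ℓ ∈ Icc 1 m, (ℓ:ℝ) = (m ! : ℝ) := by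
  rw [← Nat.cast_prod]
  congr 1
  rw [← Finset.Ico_add_one_right_eq_Icc, Finset.prod_Ico_id_eq_factorial]

open Polynomial Finset Nat in
private lemma erase_prod_di (k j : ℕ) (h1 : 1 ≤ j) (h2 : j ≤ k) :
    ∏ ℓ ∈ (Icc 1 k).erase j, (2*(ℓ:ℝ) - 2*(j:ℝ))
      = (-1)^(j-1) * 2^(k-1) * ((j-1)! : ℝ) * ((k-j)! : ℝ) := by
  have hsplit : (Icc 1 k).erase j = Icc 1 (j-1) ∪ Icc (j+1) k := by
    ext ℓ; simp only [Finset.mem_erase, Finset.mem_Icc, Finset.mem_union]; omega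
  have hdisj : Disjoint (Icc 1 (j-1)) (Icc (j+1) k) := by
    rw [Finset.disjoint_left]; intro x hx hx'
    simp only [Finset.mem_Icc] at hx hx'; omega
  rw [hsplit, Finset.prod_union hdisj]
  have e1 : ∏ ℓ ∈ Icc 1 (j-1), (2*(ℓ:ℝ) - 2*(j:ℝ)) = ∏ ℓ ∈ Icc 1 (j-1), (-2*(ℓ:ℝ)) := by
    apply Finset.prod_nbij' (fun ℓ => j - ℓ) (fun ℓ => j - ℓ)
    · intro a ha; simp only [Finset.mem_Icc] at *; omega
    · intro a ha; simp only [Finset.mem_Icc] at *; omega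
    · intro a ha; simp only [Finset.mem_Icc] at ha; omega
    · intro a ha; simp only [Finset.mem_Icc] at ha; omega
    · intro a ha; simp only [Finset.mem_Icc] at ha
      have hc : ((j - a : ℕ) : ℝ) = (j:ℝ) - (a:ℝ) := by
        have : a ≤ j := by omega
        push_cast [this]; ring
      rw [hc]; ring
  have e2 : ∏ ℓ ∈ Icc (j+1) k, (2*(ℓ:ℝ) - 2*(j:ℝ)) = ∏ ℓ ∈ Icc 1 (k-j), (2*(ℓ:ℝ)) := by
    apply Finset.prod_nbij' (fun ℓ => ℓ - j) (fun ℓ => ℓ + j)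
    · intro a ha; simp only [Finset.mem_Icc] at *; omega
    · intro a ha; simp only [Finset.mem_Icc] at *; omega
    · intro a ha; simp only [Finset.mem_Icc] at ha; omega
    · intro a ha; simp only [Finset.mem_Icc] at ha; omega
    · intro a ha; simp only [Finset.mem_Icc] at ha
      have hc : ((a - j : ℕ) : ℝ) = (a:ℝ) - (j:ℝ) := by
        have : j ≤ a := by omega
        push_cast [this]; ring
      rw [hc]; ring
  rw [e1, e2, Finset.prod_mul_distrib, Finset.prod_mul_distrib, Finset.prod_const,
    Finset.prod_const, prod_Icc_cast_di, prod_Icc_cast_di, Nat.card_Icc, Nat.card_Icc]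
  have c1 : j - 1 + 1 - 1 = j - 1 := by omega
  have c2 : k - j + 1 - 1 = k - j := by omega
  rw [c1, c2]
  have hk : k - 1 = (j - 1) + (k - j) := by omega
  rw [hk, pow_add]
  have : (-2:ℝ)^(j-1) = (-1)^(j-1) * 2^(j-1) := by rw [← neg_one_mul, mul_pow]
  rw [this]; ring

open Polynomial Finset Nat in
private lemma sum_shift_di (k : ℕ) (x : ℝ) :
    ∑ j ∈ Finset.Icc 1 k, (-1:ℝ)^(j-1) * (k.choose j : ℝ)
        * ∏ ℓ ∈ Finset.Icc 1 k, (x - 2*(ℓ:ℝ) - 2*(j:ℝ))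
      = ∏ ℓ ∈ Finset.Icc 1 k, (x - 2*(ℓ:ℝ)) - 2^k * (k ! : ℝ) := by
  have halt := alt_sum_prod_di k (fun ℓ => x - 2*(ℓ:ℝ))
  have hrange : Finset.range (k+1) = insert 0 (Finset.Icc 1 k) := by
    ext ℓ; simp only [Finset.mem_range, Finset.mem_insert, Finset.mem_Icc]; omega
  rw [hrange, Finset.sum_insert (by simp)] at halt
  simp only [Nat.cast_zero, mul_zero, sub_zero, pow_zero, Nat.choose_zero_right,
    Nat.cast_one, one_mul, mul_one] at halt
  have hneg : ∑ j ∈ Finset.Icc 1 k, (-1:ℝ)^(j-1) * (k.choose j : ℝ)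
        * ∏ ℓ ∈ Finset.Icc 1 k, (x - 2*(ℓ:ℝ) - 2*(j:ℝ))
      = -∑ j ∈ Finset.Icc 1 k, (-1:ℝ)^j * (k.choose j : ℝ)
        * ∏ ℓ ∈ Finset.Icc 1 k, (x - 2*(ℓ:ℝ) - 2*(j:ℝ)) := by
    rw [← Finset.sum_neg_distrib]
    refine Finset.sum_congr rfl fun j hj => ?_
    simp only [Finset.mem_Icc] at hj
    obtain ⟨m, rfl⟩ : ∃ m, j = m + 1 := ⟨j - 1, by omega⟩
    rw [Nat.add_sub_cancel, pow_succ]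
    ring
  rw [hneg]
  linarith [halt]

open Polynomial Finset Nat in
private lemma key_identity_di (k : ℕ) (x : ℝ) :
    ∑ j ∈ Finset.Icc 1 k,
        ((∏ ℓ ∈ Finset.Icc 1 k, (x - 2 * (ℓ : ℝ) - 2 * (j : ℝ))) /
          ∏ ℓ ∈ (Finset.Icc 1 k).erase j, (2 * (ℓ : ℝ) - 2 * (j : ℝ))) / (2 * (j : ℝ)) + 1
      = ∏ ℓ ∈ Finset.Icc 1 k, (x - 2 * (ℓ : ℝ)) / (2 * (ℓ : ℝ)) := by
  have hN : (2:ℝ)^k * (k ! : ℝ) ≠ 0 := by positivity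
  have hRHS : ∏ ℓ ∈ Finset.Icc 1 k, (x - 2 * (ℓ : ℝ)) / (2 * (ℓ : ℝ))
      = (∏ ℓ ∈ Finset.Icc 1 k, (x - 2 * (ℓ:ℝ))) / (2^k * (k ! : ℝ)) := by
    rw [Finset.prod_div_distrib]
    congr 1
    rw [Finset.prod_mul_distrib, Finset.prod_const, prod_Icc_cast_di, Nat.card_Icc]
    norm_num
  have hterm : ∀ j ∈ Finset.Icc 1 k,
      ((∏ ℓ ∈ Finset.Icc 1 k, (x - 2 * (ℓ : ℝ) - 2 * (j : ℝ))) /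
          ∏ ℓ ∈ (Finset.Icc 1 k).erase j, (2 * (ℓ : ℝ) - 2 * (j : ℝ))) / (2 * (j : ℝ))
        = ((-1:ℝ)^(j-1) * (k.choose j : ℝ)
            * ∏ ℓ ∈ Finset.Icc 1 k, (x - 2 * (ℓ : ℝ) - 2 * (j : ℝ))) / (2^k * (k ! : ℝ)) := by
    intro j hj
    simp only [Finset.mem_Icc] at hj
    obtain ⟨hj1, hj2⟩ := hj
    set Pj : ℝ := ∏ ℓ ∈ Finset.Icc 1 k, (x - 2 * (ℓ : ℝ) - 2 * (j : ℝ))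
    rw [erase_prod_di k j hj1 hj2, div_div]
    rw [div_eq_div_iff]
    · have hnat : (k.choose j) * ((j-1)! * ((k-j)! * (2 * j * 2^(k-1)))) = 2^k * k ! := by
        have e1 : j * (j-1)! = j ! := by
          rw [← Nat.succ_pred_eq_of_pos (by omega : 0 < j), Nat.factorial_succ]
          congr 1 <;> omega
        have e2 : k.choose j * j ! * (k-j)! = k ! := Nat.choose_mul_factorial_mul_factorial hj2
        have e3 : 2 * 2^(k-1) = 2^k := by
          rw [← pow_succ']
          congr 1
          omega
        calc (k.choose j) * ((j-1)! * ((k-j)! * (2 * j * 2^(k-1))))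
            = (k.choose j * (j * (j-1)!) * (k-j)!) * (2 * 2^(k-1)) := by ring
          _ = 2^k * k ! := by rw [e1, e3, e2, Nat.mul_comm]
      have hsq : ((-1:ℝ)^(j-1))^2 = 1 := by
        rw [← pow_mul]
        exact Even.neg_one_pow ⟨j-1, by omega⟩
      calc Pj * (2^k * (k ! : ℝ))
          = Pj * ((((k.choose j) * ((j-1)! * ((k-j)! * (2 * j * 2^(k-1)))) : ℕ) : ℝ)) := by
            rw [hnat]; push_cast; ring
        _ = (-1:ℝ)^(j-1) * (k.choose j : ℝ) * Pj
              * ((-1:ℝ)^(j-1) * 2^(k-1) * ((j-1)! : ℝ) * ((k-j)! : ℝ) * (2 * (j:ℝ))) := by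
            push_cast
            rw [show ∀ A B C D E F : ℝ, ((-1:ℝ)^(j-1) * A * B) * ((-1:ℝ)^(j-1) * C * D * E * F)
              = ((-1:ℝ)^(j-1))^2 * (A * B * C * D * E * F) from fun A B C D E F => by ring]
            rw [hsq]
            ring
    · have hj0 : (0:ℝ) < j := by exact_mod_cast hj1
      have h1 : ((-1:ℝ)^(j-1) * 2^(k-1) * ((j-1)! : ℝ) * ((k-j)! : ℝ)) ≠ 0 := by
        apply mul_ne_zero; apply mul_ne_zero; apply mul_ne_zero
        · exact pow_ne_zero _ (by norm_num)
        · positivity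
        · positivity
        · positivity
      exact mul_ne_zero h1 (by positivity)
    · exact hN
  rw [Finset.sum_congr rfl hterm, ← Finset.sum_div, sum_shift_di k x, hRHS]
  field_simp
  ring

/-- For `d` a positive odd integer, `k̃ = ⌊(d+2)/4⌋`, and the coefficients
`D j = (∏_{1≤ℓ≤k̃} (d + 2 - 2ℓ - 2j)) / (∏_{1≤ℓ≤k̃, ℓ≠j} (2ℓ - 2j))`, one has
`∑_{j=1}^{k̃} D j / (2j) + 1 = ∏_{ℓ=1}^{k̃} (d + 2 - 2ℓ)/(2ℓ)`. -/
theorem di_identity_two (d : ℕ) (hd : Odd d) (hd0 : 0 < d)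
    (D : ℕ → ℝ)
    (hD : ∀ j, D j =
      (∏ ℓ ∈ Finset.Icc 1 ((d + 2) / 4), ((d : ℝ) + 2 - 2 * (ℓ : ℝ) - 2 * (j : ℝ))) /
        ∏ ℓ ∈ (Finset.Icc 1 ((d + 2) / 4)).erase j, (2 * (ℓ : ℝ) - 2 * (j : ℝ))) :
    ∑ j ∈ Finset.Icc 1 ((d + 2) / 4), D j / (2 * (j : ℝ)) + 1 =
      ∏ ℓ ∈ Finset.Icc 1 ((d + 2) / 4), ((d : ℝ) + 2 - 2 * (ℓ : ℝ)) / (2 * (ℓ : ℝ)) := by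
  simp only [hD]
  exact key_identity_di ((d + 2) / 4) ((d : ℝ) + 2)
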